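/- Let Δp(t) solve Δp'(t) = -γ ((‖Δp(t)‖² - D_s²) / (2‖Δp(t)‖²)) Δp(t) with initial condition Δp(t₀) = D₀ ê for a unit vector ê and D₀ > D_s > 0. Then Δp(t) = D(t) ê for all t ≥ t₀, where D(t) = sqrt((D₀² - D_s²)e^{-γ(t-t₀)} + D_s²); in particular the direction of the relative position is invariant. -/

import Mathlib

open Real Set

theorem stmt_17 (γ D_s D₀ t₀ : ℝ) (hγ : 0 < γ) (hDs : 0 < D_s) (h₀ : D_s < D₀)
    (e : EuclideanSpace ℝ (Fin 2)) (he : ‖e‖ = 1)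
    (Δp : ℝ → EuclideanSpace ℝ (Fin 2))
    (hinit : Δp t₀ = D₀ • e)
    (hode : ∀ t ≥ t₀, HasDerivAt Δp
      ((-γ * (‖Δp t‖^2 - D_s^2) / (2 * ‖Δp t‖^2)) • Δp t) t) :
    ∀ t ≥ t₀, Δp t =
      Real.sqrt ((D₀^2 - D_s^2) * Real.exp (-γ*(t - t₀)) + D_s^2) • e := by
  have hD₀ : 0 < D₀ := hDs.trans h₀
  set K : ℝ := D₀^2 - D_s^2 with hKdef
  have hK : 0 < K := by nlinarith
  set n : ℝ → ℝ := fun t => ‖Δp t‖^2 with hndef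
  set c : ℝ → ℝ := fun t => -γ * (n t - D_s^2) / (2 * n t) with hcdef
  -- derivative of n
  have hn : ∀ t ≥ t₀, HasDerivAt n (2 * (c t * n t)) t := by
    intro t ht
    have h1 : HasDerivAt (fun s => (inner ℝ (Δp s) (Δp s) : ℝ))
        (inner ℝ (Δp t) (c t • Δp t) + inner ℝ (c t • Δp t) (Δp t)) t :=
      HasDerivAt.inner ℝ (hode t ht) (hode t ht)
    have h2 : (inner ℝ (Δp t) (c t • Δp t) + inner ℝ (c t • Δp t) (Δp t) : ℝ)
        = 2 * (c t * n t) := by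
      rw [real_inner_smul_right, real_inner_smul_left, real_inner_self_eq_norm_sq]
      ring
    rw [h2] at h1
    convert h1 using 1
    funext s
    rw [real_inner_self_eq_norm_sq]
  have hcont : ContinuousOn n (Ici t₀) := fun t ht =>
    ((hn t ht).continuousAt).continuousWithinAt
  have hnt₀ : n t₀ = D₀^2 := by
    simp [hndef, hinit, norm_smul, abs_of_pos hD₀, he, mul_pow]
  -- positivity of n via monotone auxiliary function
  have hnpos : ∀ t ≥ t₀, 0 < n t := by
    have hmono : MonotoneOn (fun t => n t * Real.exp (γ * (t - t₀))) (Ici t₀) := by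
      have hder : ∀ t ≥ t₀, HasDerivAt (fun t => n t * Real.exp (γ * (t - t₀)))
          (2 * (c t * n t) * Real.exp (γ * (t - t₀))
            + n t * (Real.exp (γ * (t - t₀)) * γ)) t := by
        intro t ht
        have hex : HasDerivAt (fun s => Real.exp (γ * (s - t₀)))
            (Real.exp (γ * (t - t₀)) * γ) t := by
          simpa using (((hasDerivAt_id t).sub_const t₀).const_mul γ).exp
        exact (hn t ht).mul hex
      apply monotoneOn_of_deriv_nonneg (convex_Ici t₀)
      · exact (hcont.mul (Real.continuous_exp.comp (by fun_prop)).continuousOn)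
      · intro t ht
        rw [interior_Ici] at ht
        exact ((hder t (le_of_lt ht)).differentiableAt).differentiableWithinAt
      · intro t ht
        rw [interior_Ici] at ht
        rw [(hder t (le_of_lt ht)).deriv]
        have hn0 : (0:ℝ) ≤ n t := sq_nonneg ‖Δp t‖
        rcases hn0.eq_or_lt with h | h
        · have hc0 : c t * n t = 0 := by rw [← h]; ring
          rw [hc0, ← h]
          simp
        · have h2cn : 2 * (c t * n t) = -γ * (n t - D_s^2) := by
            rw [hcdef]; field_simp
          rw [h2cn]
          have : (-γ * (n t - D_s^2)) * Real.exp (γ * (t - t₀))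
              + n t * (Real.exp (γ * (t - t₀)) * γ)
              = γ * D_s^2 * Real.exp (γ * (t - t₀)) := by ring
          rw [this]
          positivity
    intro t ht
    have := hmono (self_mem_Ici) ht ht
    have hexp : 0 < Real.exp (γ * (t - t₀)) := Real.exp_pos _
    simp only [sub_self, mul_zero, Real.exp_zero, mul_one, hnt₀] at this
    nlinarith
  -- formula for n
  have hformula : ∀ t ≥ t₀, n t = K * Real.exp (-γ*(t - t₀)) + D_s^2 := by
    intro T hT
    have hder : ∀ t ≥ t₀, HasDerivAt (fun t => (n t - D_s^2) * Real.exp (γ * (t - t₀))) 0 t := by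
      intro t ht
      have hex : HasDerivAt (fun s => Real.exp (γ * (s - t₀)))
          (Real.exp (γ * (t - t₀)) * γ) t := by
        simpa using (((hasDerivAt_id t).sub_const t₀).const_mul γ).exp
      have h := ((hn t ht).sub_const (D_s^2)).mul hex
      refine h.congr_deriv (Eq.symm ?_)
      have h2cn : 2 * (c t * n t) = -γ * (n t - D_s^2) := by
        have := (hnpos t ht).ne'
        rw [hcdef]; field_simp
      rw [h2cn]; ring
    have := constant_of_has_deriv_right_zero
      (f := fun t => (n t - D_s^2) * Real.exp (γ * (t - t₀))) (a := t₀) (b := T)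
      (fun t ht => (((hcont.mono Icc_subset_Ici_self) t ht).sub continuousWithinAt_const).mul
        ((Real.continuous_exp.comp (by fun_prop)).continuousOn t ht))
      (fun t ht => (hder t (mem_Ico.mp ht).1).hasDerivWithinAt)
      T (mem_Icc.mpr ⟨hT, le_refl T⟩)
    simp only [sub_self, mul_zero, Real.exp_zero, mul_one, hnt₀] at this
    have hexp : Real.exp (γ * (T - t₀)) ≠ 0 := (Real.exp_pos _).ne'
    have hinv : Real.exp (-γ*(T - t₀)) = (Real.exp (γ * (T - t₀)))⁻¹ := by
      rw [← Real.exp_neg]; ring_nf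
    rw [hinv]
    field_simp at this ⊢
    linarith [this]
  -- the candidate amplitude
  set Df : ℝ → ℝ := fun t => Real.sqrt (K * Real.exp (-γ*(t - t₀)) + D_s^2) with hDfdef
  have hin_pos : ∀ t, 0 < K * Real.exp (-γ*(t - t₀)) + D_s^2 := by
    intro t; have := Real.exp_pos (-γ*(t - t₀)); positivity
  have hDfpos : ∀ t, 0 < Df t := fun t => Real.sqrt_pos.mpr (hin_pos t)
  have hDfsq : ∀ t, Df t ^ 2 = K * Real.exp (-γ*(t - t₀)) + D_s^2 := fun t =>
    Real.sq_sqrt (hin_pos t).le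
  have hDft₀ : Df t₀ = D₀ := by
    rw [hDfdef]
    simp only [sub_self, mul_zero, Real.exp_zero, mul_one]
    rw [hKdef]
    rw [show D₀^2 - D_s^2 + D_s^2 = D₀^2 by ring]
    exact Real.sqrt_sq hD₀.le
  -- derivative of Df
  have hg : ∀ t, HasDerivAt (fun t => K * Real.exp (-γ*(t - t₀)) + D_s^2)
      (K * (Real.exp (-γ*(t - t₀)) * -γ)) t := by
    intro t
    simpa using ((((hasDerivAt_id t).sub_const t₀).const_mul (-γ)).exp.const_mul K).add_const (D_s^2)
  have hDf : ∀ t, HasDerivAt Df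
      (K * (Real.exp (-γ*(t - t₀)) * -γ) / (2 * Df t)) t := by
    intro t
    have h := (Real.hasDerivAt_sqrt (hin_pos t).ne').comp t (hg t)
    have hfun : ((fun x => Real.sqrt x) ∘ fun t => K * Real.exp (-γ*(t - t₀)) + D_s^2) = Df := rfl
    rw [hfun] at h
    refine h.congr_deriv (Eq.symm ?_)
    show K * (Real.exp (-γ*(t - t₀)) * -γ) / (2 * Real.sqrt (K * Real.exp (-γ*(t - t₀)) + D_s^2))
      = 1 / (2 * Real.sqrt (K * Real.exp (-γ*(t - t₀)) + D_s^2)) * (K * (Real.exp (-γ*(t - t₀)) * -γ))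
    ring
  -- u is constant
  have hu : ∀ t ≥ t₀, HasDerivAt (fun t => (Df t)⁻¹ • Δp t) 0 t := by
    intro t ht
    have hinv : HasDerivAt (fun t => (Df t)⁻¹)
        (-(K * (Real.exp (-γ*(t - t₀)) * -γ) / (2 * Df t)) / (Df t)^2) t :=
      (hDf t).inv (hDfpos t).ne'
    have h := hinv.smul (hode t ht)
    refine h.congr_deriv (Eq.symm ?_)
    rw [smul_smul, ← add_smul]
    have hsc : (Df t)⁻¹ * (-γ * (‖Δp t‖^2 - D_s^2) / (2 * ‖Δp t‖^2))
        + -(K * (Real.exp (-γ*(t - t₀)) * -γ) / (2 * Df t)) / (Df t)^2 = 0 := by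
      have hnf := hformula t ht
      have hnn : ‖Δp t‖^2 = Df t ^2 := by rw [hDfsq t]; exact hnf
      rw [hnn]
      have hDne := (hDfpos t).ne'
      have hKe : Df t ^ 2 - D_s^2 = K * Real.exp (-γ*(t - t₀)) := by
        rw [hDfsq t]; ring
      rw [hKe]
      field_simp
      ring
    rw [hsc, zero_smul]
  have hucont : ContinuousOn (fun t => (Df t)⁻¹ • Δp t) (Ici t₀) := fun t ht =>
    ((hu t ht).continuousAt).continuousWithinAt
  intro t ht
  have hconst := constant_of_has_deriv_right_zero (f := fun t => (Df t)⁻¹ • Δp t)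
    (a := t₀) (b := t) (hucont.mono Icc_subset_Ici_self) (by
      intro x hx
      exact (hu x (mem_Ico.mp hx).1).hasDerivWithinAt)
    t (mem_Icc.mpr ⟨ht, le_refl t⟩)
  change (Df t)⁻¹ • Δp t = (Df t₀)⁻¹ • Δp t₀ at hconst
  have ht₀ : (Df t₀)⁻¹ • Δp t₀ = e := by
    rw [hinit, hDft₀, smul_smul, inv_mul_cancel₀ hD₀.ne', one_smul]
  rw [ht₀] at hconst
  show Δp t = Df t • e
  rw [← hconst, smul_smul, mul_inv_cancel₀ (hDfpos t).ne', one_smul]
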